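/- arXiv:2403.15936 — 2 statements merged into one kernel-verified Lean document; each statement's English description precedes it below -/
import Mathlib

section
/- Monotonicity of marginal costs along used directions (Proposition 4): In the service-chain model, let (φ,t) be feasible for r with a marginal vector λ satisfying the sufficient-optimality condition. Then for every stage (a,k) and every i ∈ V: (i) if k < K_a and φ_{i0}(a,k) > 0 then λ_i(a,k) ≥ λ_i(a,k+1); (ii) for every j ∈ V with φ_{ij}(a,k) > 0, λ_i(a,k) ≥ λ_j(a,k). If moreover every D_{ij} and every C_i is strictly increasing and t_i(a,k) > 0, then the inequalities in (i) and (ii) hold strictly. -/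
open scoped BigOperators
open Classical

/-- The service-chain network model: a finite directed graph, a finite set of
applications, each with a chain length, a destination, packet sizes and computation
weights, together with nondecreasing convex continuously differentiable link and
computation cost functions (with their derivatives). -/
structure SCNet (V A : Type) [Fintype V] [DecidableEq V] [Fintype A] where
  /-- the edge relation -/
  E : V → V → Prop
  /-- chain length of each application -/
  K : A → ℕ
  /-- destination of each application -/
  dest : A → V
  /-- packet size of each stage -/
  L : A → ℕ → ℝ
  hL : ∀ a k, k ≤ K a → 0 < L a k
  /-- computation weights -/
  w : V → A → ℕ → ℝ
  hw : ∀ i a k, k ≤ K a → 0 < w i a k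
  /-- link cost functions -/
  D : V → V → ℝ → ℝ
  /-- derivative of the link cost functions -/
  D' : V → V → ℝ → ℝ
  /-- computation cost functions -/
  C : V → ℝ → ℝ
  /-- derivative of the computation cost functions -/
  C' : V → ℝ → ℝ
  hD_mono : ∀ i j, E i j → MonotoneOn (D i j) (Set.Ici 0)
  hD_conv : ∀ i j, E i j → ConvexOn ℝ (Set.Ici 0) (D i j)
  hD_deriv : ∀ i j, E i j → ∀ x ∈ Set.Ici (0 : ℝ),
    HasDerivWithinAt (D i j) (D' i j x) (Set.Ici 0) x
  hD'_cont : ∀ i j, E i j → ContinuousOn (D' i j) (Set.Ici 0)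
  hC_mono : ∀ i, MonotoneOn (C i) (Set.Ici 0)
  hC_conv : ∀ i, ConvexOn ℝ (Set.Ici 0) (C i)
  hC_deriv : ∀ i, ∀ x ∈ Set.Ici (0 : ℝ),
    HasDerivWithinAt (C i) (C' i x) (Set.Ici 0) x
  hC'_cont : ∀ i, ContinuousOn (C' i) (Set.Ici 0)

variable {V A : Type} [Fintype V] [DecidableEq V] [Fintype A]

/-- A forwarding strategy: `φ i (some j) a k` is the fraction of stage-(a,k) traffic
that node `i` forwards to node `j`; `φ i none a k` is the fraction forwarded to `i`'s CPU. -/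
structure IsStrategy (N : SCNet V A) (φ : V → Option V → A → ℕ → ℝ) : Prop where
  nonneg : ∀ i j a k, 0 ≤ φ i j a k
  le_one : ∀ i j a k, φ i j a k ≤ 1
  no_edge : ∀ i j a k, ¬ N.E i j → φ i (some j) a k = 0
  cpu_last : ∀ i a, φ i none a (N.K a) = 0
  sum_one : ∀ i a k, k ≤ N.K a → ¬(i = N.dest a ∧ k = N.K a) →
    φ i none a k + ∑ j, φ i (some j) a k = 1
  sum_dest : ∀ a,
    φ (N.dest a) none a (N.K a) + ∑ j, φ (N.dest a) (some j) a (N.K a) = 0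

/-- A traffic vector for input rates `r` and strategy `φ`. -/
structure IsTraffic (N : SCNet V A) (r : V → A → ℝ) (φ : V → Option V → A → ℕ → ℝ)
    (t : V → A → ℕ → ℝ) : Prop where
  nonneg : ∀ i a k, 0 ≤ t i a k
  base : ∀ i a, t i a 0 = r i a + ∑ j, t j a 0 * φ j (some i) a 0
  step : ∀ i a k, 1 ≤ k → k ≤ N.K a →
    t i a k = (∑ j, t j a k * φ j (some i) a k) + t i a (k - 1) * φ i none a (k - 1)

/-- A pair (strategy, traffic) feasible for the input rates `r`. -/
def Feasible (N : SCNet V A) (r : V → A → ℝ) (φ : V → Option V → A → ℕ → ℝ)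
    (t : V → A → ℕ → ℝ) : Prop :=
  IsStrategy N φ ∧ IsTraffic N r φ t

/-- Total flow (bit/sec) on link `(i,j)`. -/
noncomputable def linkFlow (N : SCNet V A) (φ : V → Option V → A → ℕ → ℝ)
    (t : V → A → ℕ → ℝ) (i j : V) : ℝ :=
  ∑ a, ∑ k ∈ Finset.range (N.K a + 1), N.L a k * (t i a k * φ i (some j) a k)

/-- Total computation workload at node `i`. -/
noncomputable def workload (N : SCNet V A) (φ : V → Option V → A → ℕ → ℝ)
    (t : V → A → ℕ → ℝ) (i : V) : ℝ :=
  ∑ a, ∑ k ∈ Finset.range (N.K a + 1), N.w i a k * (t i a k * φ i none a k)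

/-- The aggregated communication and computation cost `T(φ,t)`. -/
noncomputable def totalCost (N : SCNet V A) (φ : V → Option V → A → ℕ → ℝ)
    (t : V → A → ℕ → ℝ) : ℝ :=
  (∑ i, ∑ j, if N.E i j then N.D i j (linkFlow N φ t i j) else 0)
    + ∑ i, N.C i (workload N φ t i)

/-- A marginal-cost vector `λ` for the pair `(φ,t)`, i.e. a solution of the
recursion defining `∂T/∂t_i(a,k)`. -/
structure IsMarginal (N : SCNet V A) (φ : V → Option V → A → ℕ → ℝ)
    (t : V → A → ℕ → ℝ) (lam : V → A → ℕ → ℝ) : Prop where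
  last : ∀ i a, lam i a (N.K a) =
    ∑ j, φ i (some j) a (N.K a) *
      (N.L a (N.K a) * N.D' i j (linkFlow N φ t i j) + lam j a (N.K a))
  step : ∀ i a k, k < N.K a →
    lam i a k =
      (∑ j, φ i (some j) a k * (N.L a k * N.D' i j (linkFlow N φ t i j) + lam j a k))
        + φ i none a k * (N.w i a k * N.C' i (workload N φ t i) + lam i a (k + 1))

/-- `j` is an admissible forwarding direction at node `i` and stage `(a,k)`:
either a physical out-neighbor, or the CPU provided `k < K a`. -/
def Admissible (N : SCNet V A) (i : V) (a : A) (k : ℕ) : Option V → Prop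
  | some j => N.E i j
  | none => k < N.K a

/-- The modified marginals `δ_{ij}(a,k)`. -/
noncomputable def mdelta (N : SCNet V A) (φ : V → Option V → A → ℕ → ℝ)
    (t : V → A → ℕ → ℝ) (lam : V → A → ℕ → ℝ) (i : V) (a : A) (k : ℕ) :
    Option V → ℝ
  | some j => N.L a k * N.D' i j (linkFlow N φ t i j) + lam j a k
  | none => N.w i a k * N.C' i (workload N φ t i) + lam i a (k + 1)

/-- The sufficient-optimality condition: every direction used at node `i` for stage
`(a,k)` achieves the minimum modified marginal over all admissible directions. -/
def SuffCond (N : SCNet V A) (φ : V → Option V → A → ℕ → ℝ)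
    (t : V → A → ℕ → ℝ) (lam : V → A → ℕ → ℝ) : Prop :=
  ∀ i a k, k ≤ N.K a → ∀ j, Admissible N i a k j → 0 < φ i j a k →
    ∀ j', Admissible N i a k j' →
      mdelta N φ t lam i a k j ≤ mdelta N φ t lam i a k j'

section Aux

open Filter Topology

/-- The derivative (within `[0,∞)`) of a function monotone on `[0,∞)` is nonnegative. -/
lemma aux_deriv_nonneg {f : ℝ → ℝ} {f' x : ℝ} (hm : MonotoneOn f (Set.Ici 0))
    (hd : HasDerivWithinAt f f' (Set.Ici 0) x) (hx : 0 ≤ x) : 0 ≤ f' := by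
  have h := hasDerivWithinAt_iff_tendsto_slope.mp hd
  have h2 : Tendsto (slope f x) (nhdsWithin x (Set.Ioi x)) (nhds f') := by
    refine h.mono_left (nhdsWithin_mono x ?_)
    intro z hz
    exact ⟨le_trans hx (le_of_lt hz), by simpa using (ne_of_gt hz)⟩
  refine ge_of_tendsto h2 ?_
  filter_upwards [self_mem_nhdsWithin] with z hz
  have hz' : x < z := hz
  rw [slope_def_field]
  exact div_nonneg (sub_nonneg.2 (hm hx (le_trans hx hz'.le) hz'.le)) (sub_nonneg.2 hz'.le)

/-- The derivative (within `[0,∞)`) at a positive point of a convex function strictly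
monotone on `[0,∞)` is positive. -/
lemma aux_deriv_pos {f : ℝ → ℝ} {f' x : ℝ} (hm : StrictMonoOn f (Set.Ici 0))
    (hc : ConvexOn ℝ (Set.Ici 0) f)
    (hd : HasDerivWithinAt f f' (Set.Ici 0) x) (hx : 0 < x) : 0 < f' := by
  have hslope : slope f 0 x ≤ f' :=
    hc.slope_le_of_hasDerivWithinAt Set.self_mem_Ici (Set.mem_Ici.mpr hx.le) hx hd
  have hpos : 0 < slope f 0 x := by
    rw [slope_def_field]
    have : f 0 < f x := hm Set.self_mem_Ici (Set.mem_Ici.mpr hx.le) hx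
    have hx' : (0:ℝ) < x - 0 := by linarith
    exact div_pos (by linarith) hx'
  linarith

variable {V A : Type} [Fintype V] [DecidableEq V] [Fintype A]

lemma linkFlow_nonneg (N : SCNet V A) (φ : V → Option V → A → ℕ → ℝ)
    (t : V → A → ℕ → ℝ) (hφ : IsStrategy N φ) (htn : ∀ i a k, 0 ≤ t i a k) (i j : V) :
    0 ≤ linkFlow N φ t i j := by
  refine Finset.sum_nonneg fun a _ => Finset.sum_nonneg fun k hk => ?_
  have hkK : k ≤ N.K a := Nat.lt_succ_iff.mp (Finset.mem_range.mp hk)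
  exact mul_nonneg (N.hL a k hkK).le (mul_nonneg (htn i a k) (hφ.nonneg i (some j) a k))

lemma workload_nonneg (N : SCNet V A) (φ : V → Option V → A → ℕ → ℝ)
    (t : V → A → ℕ → ℝ) (hφ : IsStrategy N φ) (htn : ∀ i a k, 0 ≤ t i a k) (i : V) :
    0 ≤ workload N φ t i := by
  refine Finset.sum_nonneg fun a _ => Finset.sum_nonneg fun k hk => ?_
  have hkK : k ≤ N.K a := Nat.lt_succ_iff.mp (Finset.mem_range.mp hk)
  exact mul_nonneg (N.hw i a k hkK).le (mul_nonneg (htn i a k) (hφ.nonneg i none a k))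

lemma linkFlow_pos (N : SCNet V A) (φ : V → Option V → A → ℕ → ℝ)
    (t : V → A → ℕ → ℝ) (hφ : IsStrategy N φ) (htn : ∀ i a k, 0 ≤ t i a k)
    {i j : V} {a : A} {k : ℕ} (hk : k ≤ N.K a) (htpos : 0 < t i a k)
    (hφpos : 0 < φ i (some j) a k) : 0 < linkFlow N φ t i j := by
  refine Finset.sum_pos'
    (fun a' _ => Finset.sum_nonneg fun k' hk' => ?_) ⟨a, Finset.mem_univ a, ?_⟩
  · have hkK : k' ≤ N.K a' := Nat.lt_succ_iff.mp (Finset.mem_range.mp hk')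
    exact mul_nonneg (N.hL a' k' hkK).le
      (mul_nonneg (htn i a' k') (hφ.nonneg i (some j) a' k'))
  · refine Finset.sum_pos' (fun k' hk' => ?_)
      ⟨k, Finset.mem_range.mpr (Nat.lt_succ_of_le hk), ?_⟩
    · have hkK : k' ≤ N.K a := Nat.lt_succ_iff.mp (Finset.mem_range.mp hk')
      exact mul_nonneg (N.hL a k' hkK).le
        (mul_nonneg (htn i a k') (hφ.nonneg i (some j) a k'))
    · exact mul_pos (N.hL a k hk) (mul_pos htpos hφpos)

lemma workload_pos (N : SCNet V A) (φ : V → Option V → A → ℕ → ℝ)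
    (t : V → A → ℕ → ℝ) (hφ : IsStrategy N φ) (htn : ∀ i a k, 0 ≤ t i a k)
    {i : V} {a : A} {k : ℕ} (hk : k ≤ N.K a) (htpos : 0 < t i a k)
    (hφpos : 0 < φ i none a k) : 0 < workload N φ t i := by
  refine Finset.sum_pos'
    (fun a' _ => Finset.sum_nonneg fun k' hk' => ?_) ⟨a, Finset.mem_univ a, ?_⟩
  · have hkK : k' ≤ N.K a' := Nat.lt_succ_iff.mp (Finset.mem_range.mp hk')
    exact mul_nonneg (N.hw i a' k' hkK).le
      (mul_nonneg (htn i a' k') (hφ.nonneg i none a' k'))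
  · refine Finset.sum_pos' (fun k' hk' => ?_)
      ⟨k, Finset.mem_range.mpr (Nat.lt_succ_of_le hk), ?_⟩
    · have hkK : k' ≤ N.K a := Nat.lt_succ_iff.mp (Finset.mem_range.mp hk')
      exact mul_nonneg (N.hw i a k' hkK).le
        (mul_nonneg (htn i a k') (hφ.nonneg i none a k'))
    · exact mul_pos (N.hw i a k hk) (mul_pos htpos hφpos)

/-- Key inequality: the modified marginal of any used direction is bounded above by
the marginal cost at the node. -/
lemma mdelta_le_lam (N : SCNet V A) (φ : V → Option V → A → ℕ → ℝ)
    (t : V → A → ℕ → ℝ) (lam : V → A → ℕ → ℝ)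
    (hφ : IsStrategy N φ) (hlam : IsMarginal N φ t lam) (hsuff : SuffCond N φ t lam)
    {a : A} {k : ℕ} {i : V} {j0 : Option V} (hk : k ≤ N.K a)
    (hadm : Admissible N i a k j0) (hpos : 0 < φ i j0 a k) :
    mdelta N φ t lam i a k j0 ≤ lam i a k := by
  have hnd : ¬(i = N.dest a ∧ k = N.K a) := by
    rintro ⟨hi, hkK⟩
    subst hi
    subst hkK
    have h0 := hφ.sum_dest a
    have hsum : (0:ℝ) ≤ ∑ j, φ (N.dest a) (some j) a (N.K a) :=
      Finset.sum_nonneg fun j _ => hφ.nonneg _ _ _ _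
    have hnone : (0:ℝ) ≤ φ (N.dest a) none a (N.K a) := hφ.nonneg _ _ _ _
    cases j0 with
    | none => linarith
    | some j =>
      have hle : φ (N.dest a) (some j) a (N.K a) ≤ ∑ j', φ (N.dest a) (some j') a (N.K a) :=
        Finset.single_le_sum (fun j' _ => hφ.nonneg _ _ _ _) (Finset.mem_univ j)
      linarith
  have hS : φ i none a k + ∑ j, φ i (some j) a k = 1 := hφ.sum_one i a k hk hnd
  have hlamEq : lam i a k = φ i none a k * mdelta N φ t lam i a k none
      + ∑ j, φ i (some j) a k * mdelta N φ t lam i a k (some j) := by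
    rcases lt_or_eq_of_le hk with hlt | heq
    · rw [hlam.step i a k hlt]
      simp only [mdelta]
      ring
    · subst heq
      rw [hlam.last i a, hφ.cpu_last i a]
      simp only [mdelta]
      ring
  have hmin := hsuff i a k hk j0 hadm hpos
  have h1 : φ i none a k * mdelta N φ t lam i a k j0
      ≤ φ i none a k * mdelta N φ t lam i a k none := by
    rcases eq_or_lt_of_le (hφ.nonneg i none a k) with h | h
    · rw [← h]; simp
    · have hklt : k < N.K a := by
        rcases lt_or_eq_of_le hk with h' | h'
        · exact h'
        · exfalso
          rw [h'] at h
          rw [hφ.cpu_last i a] at h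
          exact lt_irrefl 0 h
      exact mul_le_mul_of_nonneg_left (hmin none hklt) h.le
  have h2 : ∀ j ∈ (Finset.univ : Finset V),
      φ i (some j) a k * mdelta N φ t lam i a k j0
        ≤ φ i (some j) a k * mdelta N φ t lam i a k (some j) := by
    intro j _
    rcases eq_or_lt_of_le (hφ.nonneg i (some j) a k) with h | h
    · rw [← h]; simp
    · have hE : N.E i j := by
        by_contra hne
        rw [hφ.no_edge i j a k hne] at h
        exact lt_irrefl 0 h
      exact mul_le_mul_of_nonneg_left (hmin (some j) hE) h.le
  calc mdelta N φ t lam i a k j0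
      = (φ i none a k + ∑ j, φ i (some j) a k) * mdelta N φ t lam i a k j0 := by
        rw [hS]; ring
    _ = φ i none a k * mdelta N φ t lam i a k j0
        + ∑ j, φ i (some j) a k * mdelta N φ t lam i a k j0 := by
        rw [add_mul, Finset.sum_mul]
    _ ≤ φ i none a k * mdelta N φ t lam i a k none
        + ∑ j, φ i (some j) a k * mdelta N φ t lam i a k (some j) :=
        add_le_add h1 (Finset.sum_le_sum h2)
    _ = lam i a k := hlamEq.symm

end Aux

/-- **Proposition 4 (Monotonicity of marginal costs along used directions).** Under
the sufficient-optimality condition, the marginal cost `λ` is nonincreasing along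
every used forwarding direction and across every used computation step; the
monotonicity is strict whenever all cost functions are strictly increasing and the
local traffic is strictly positive. -/
theorem marginal_monotone_along_used_directions
    (N : SCNet V A) (r : V → A → ℝ) (hr : ∀ i a, 0 ≤ r i a)
    (φ : V → Option V → A → ℕ → ℝ) (t : V → A → ℕ → ℝ) (lam : V → A → ℕ → ℝ)
    (hfeas : Feasible N r φ t) (hlam : IsMarginal N φ t lam)
    (hsuff : SuffCond N φ t lam) :
    (∀ a k, k ≤ N.K a → ∀ i,
      (k < N.K a → 0 < φ i none a k → lam i a (k + 1) ≤ lam i a k)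
      ∧ (∀ j, 0 < φ i (some j) a k → lam j a k ≤ lam i a k))
    ∧ ((∀ i j, N.E i j → StrictMonoOn (N.D i j) (Set.Ici 0)) →
       (∀ i, StrictMonoOn (N.C i) (Set.Ici 0)) →
       ∀ a k, k ≤ N.K a → ∀ i, 0 < t i a k →
        (k < N.K a → 0 < φ i none a k → lam i a (k + 1) < lam i a k)
        ∧ (∀ j, 0 < φ i (some j) a k → lam j a k < lam i a k)) := by
  obtain ⟨hφ, ht⟩ := hfeas
  have htn : ∀ i a k, 0 ≤ t i a k := ht.nonneg
  constructor
  · intro a k hk i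
    constructor
    · intro hklt hφ0
      have hkey := mdelta_le_lam N φ t lam hφ hlam hsuff hk (j0 := none) hklt hφ0
      have hwn : 0 ≤ workload N φ t i := workload_nonneg N φ t hφ htn i
      have hC' : 0 ≤ N.C' i (workload N φ t i) :=
        aux_deriv_nonneg (N.hC_mono i) (N.hC_deriv i _ (Set.mem_Ici.mpr hwn)) hwn
      have hw := N.hw i a k hk
      have : lam i a (k + 1) ≤ mdelta N φ t lam i a k none := by
        simp only [mdelta]
        nlinarith
      linarith
    · intro j hφj
      have hE : N.E i j := by
        by_contra hne
        rw [hφ.no_edge i j a k hne] at hφj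
        exact lt_irrefl 0 hφj
      have hkey := mdelta_le_lam N φ t lam hφ hlam hsuff hk (j0 := some j) hE hφj
      have hfn : 0 ≤ linkFlow N φ t i j := linkFlow_nonneg N φ t hφ htn i j
      have hD' : 0 ≤ N.D' i j (linkFlow N φ t i j) :=
        aux_deriv_nonneg (N.hD_mono i j hE) (N.hD_deriv i j hE _ (Set.mem_Ici.mpr hfn)) hfn
      have hL := N.hL a k hk
      have : lam j a k ≤ mdelta N φ t lam i a k (some j) := by
        simp only [mdelta]
        nlinarith
      linarith
  · intro hDstrict hCstrict a k hk i htpos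
    constructor
    · intro hklt hφ0
      have hkey := mdelta_le_lam N φ t lam hφ hlam hsuff hk (j0 := none) hklt hφ0
      have hwp : 0 < workload N φ t i := workload_pos N φ t hφ htn hk htpos hφ0
      have hwn : 0 ≤ workload N φ t i := hwp.le
      have hC' : 0 < N.C' i (workload N φ t i) :=
        aux_deriv_pos (hCstrict i) (N.hC_conv i) (N.hC_deriv i _ (Set.mem_Ici.mpr hwn)) hwp
      have hw := N.hw i a k hk
      have : lam i a (k + 1) < mdelta N φ t lam i a k none := by
        simp only [mdelta]
        nlinarith
      linarith
    · intro j hφj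
      have hE : N.E i j := by
        by_contra hne
        rw [hφ.no_edge i j a k hne] at hφj
        exact lt_irrefl 0 hφj
      have hkey := mdelta_le_lam N φ t lam hφ hlam hsuff hk (j0 := some j) hE hφj
      have hfp : 0 < linkFlow N φ t i j := linkFlow_pos N φ t hφ htn hk htpos hφj
      have hfn : 0 ≤ linkFlow N φ t i j := hfp.le
      have hD' : 0 < N.D' i j (linkFlow N φ t i j) :=
        aux_deriv_pos (hDstrict i j hE) (N.hD_conv i j hE)
          (N.hD_deriv i j hE _ (Set.mem_Ici.mpr hfn)) hfp
      have hL := N.hL a k hk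
      have : lam j a k < mdelta N φ t lam i a k (some j) := by
        simp only [mdelta]
        nlinarith
      linarith
end

section
/- Sufficient optimality condition with congestion control (Theorem 5): In the service-chain model with the congestion-control extension, let r be an admitted rate, (φ,t) feasible for r, and λ a marginal vector for (φ,t) satisfying the sufficient-optimality condition. Suppose in addition that for every i ∈ V and a ∈ A with r̄_i(a) > 0: if r_i(a) > 0 then λ_i(a,0) ≤ U'_{ia}(r_i(a)), and if r_i(a) < r̄_i(a) then λ_i(a,0) ≥ U'_{ia}(r_i(a)). Then (r,φ,t) maximizes the utility-minus-cost: W(r,φ,t) ≥ W(r′,φ′,t′) for every admitted rate r′ and every pair (φ′,t′) feasible for r′. -/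
open scoped BigOperators
open Classical

variable {V A : Type} [Fintype V] [DecidableEq V] [Fintype A]

section MyAux

variable {V A : Type} [Fintype V] [DecidableEq V] [Fintype A]

lemma my_convex_tangent {S : Set ℝ} {f : ℝ → ℝ} (hf : ConvexOn ℝ S f) {x y d : ℝ}
    (hx : x ∈ S) (hy : y ∈ S) (hd : HasDerivWithinAt f d S x) :
    f x + d * (y - x) ≤ f y := by
  rcases lt_trichotomy x y with h | h | h
  · have h2 := hf.le_slope_of_hasDerivWithinAt hx hy h hd
    rw [slope_def_field, le_div_iff₀ (by linarith : (0:ℝ) < y - x)] at h2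
    nlinarith
  · subst h; simp
  · have h2 := hf.slope_le_of_hasDerivWithinAt hy hx h hd
    rw [slope_def_field, div_le_iff₀ (by linarith : (0:ℝ) < x - y)] at h2
    nlinarith

lemma my_concave_tangent {S : Set ℝ} {f : ℝ → ℝ} (hf : ConcaveOn ℝ S f) {x y d : ℝ}
    (hx : x ∈ S) (hy : y ∈ S) (hd : HasDerivWithinAt f d S x) :
    f y ≤ f x + d * (y - x) := by
  have h := my_convex_tangent hf.neg hx hy hd.neg
  simp only [Pi.neg_apply] at h
  linarith

/-- per-application linearized cost (derivatives taken at the reference pair `(φ,t)`). -/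
noncomputable def costa (N : SCNet V A) (φ : V → Option V → A → ℕ → ℝ) (t : V → A → ℕ → ℝ)
    (ψ : V → Option V → A → ℕ → ℝ) (s : V → A → ℕ → ℝ) (a : A) : ℝ :=
  ∑ k ∈ Finset.range (N.K a + 1),
    ((∑ i, ∑ j, (N.L a k * N.D' i j (linkFlow N φ t i j)) * (s i a k * ψ i (some j) a k))
      + ∑ i, (N.w i a k * N.C' i (workload N φ t i)) * (s i a k * ψ i none a k))

lemma strat_dest_some (N : SCNet V A) {ψ : V → Option V → A → ℕ → ℝ} (hψ : IsStrategy N ψ)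
    (a : A) (j : V) : ψ (N.dest a) (some j) a (N.K a) = 0 := by
  have h := hψ.sum_dest a
  have h1 : 0 ≤ ψ (N.dest a) none a (N.K a) := hψ.nonneg _ _ _ _
  have h2 : ∀ x ∈ Finset.univ, (0:ℝ) ≤ ψ (N.dest a) (some x) a (N.K a) :=
    fun x _ => hψ.nonneg _ _ _ _
  have h3 := Finset.single_le_sum h2 (Finset.mem_univ j)
  have h5 := hψ.nonneg (N.dest a) (some j) a (N.K a)
  linarith

lemma strat_dest_none (N : SCNet V A) {ψ : V → Option V → A → ℕ → ℝ} (hψ : IsStrategy N ψ)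
    (a : A) : ψ (N.dest a) none a (N.K a) = 0 := by
  have h := hψ.sum_dest a
  have h1 : 0 ≤ ψ (N.dest a) none a (N.K a) := hψ.nonneg _ _ _ _
  have h4 : (0:ℝ) ≤ ∑ x, ψ (N.dest a) (some x) a (N.K a) :=
    Finset.sum_nonneg fun x _ => hψ.nonneg _ _ _ _
  linarith

lemma lam_dest (N : SCNet V A) {φ : V → Option V → A → ℕ → ℝ} {t : V → A → ℕ → ℝ}
    {lam : V → A → ℕ → ℝ} (hφ : IsStrategy N φ) (hlam : IsMarginal N φ t lam) (a : A) :
    lam (N.dest a) a (N.K a) = 0 := by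
  rw [hlam.last]
  exact Finset.sum_eq_zero fun j _ => by rw [strat_dest_some N hφ a j, zero_mul]

lemma lam_min (N : SCNet V A) {φ : V → Option V → A → ℕ → ℝ} {t : V → A → ℕ → ℝ}
    {lam : V → A → ℕ → ℝ} (hφ : IsStrategy N φ) (hlam : IsMarginal N φ t lam)
    (hsuff : SuffCond N φ t lam) (i : V) (a : A) (k : ℕ) (hk : k ≤ N.K a)
    (hne : ¬(i = N.dest a ∧ k = N.K a)) (j' : Option V) (hj' : Admissible N i a k j') :
    lam i a k ≤ mdelta N φ t lam i a k j' := by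
  have hterm : ∀ j : V,
      φ i (some j) a k * (N.L a k * N.D' i j (linkFlow N φ t i j) + lam j a k)
        ≤ φ i (some j) a k * mdelta N φ t lam i a k j' := by
    intro j
    rcases (hφ.nonneg i (some j) a k).eq_or_lt with h | h
    · rw [← h]; simp
    · refine mul_le_mul_of_nonneg_left ?_ h.le
      have hadm : Admissible N i a k (some j) := by
        show N.E i j
        by_contra hE
        exact h.ne' (hφ.no_edge i j a k hE)
      exact hsuff i a k hk (some j) hadm h j' hj'
  rcases lt_or_eq_of_le hk with hlt | heq
  · rw [hlam.step i a k hlt]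
    have hsum := hφ.sum_one i a k hk hne
    have hnone : φ i none a k * (N.w i a k * N.C' i (workload N φ t i) + lam i a (k+1))
        ≤ φ i none a k * mdelta N φ t lam i a k j' := by
      rcases (hφ.nonneg i none a k).eq_or_lt with h | h
      · rw [← h]; simp
      · refine mul_le_mul_of_nonneg_left ?_ h.le
        exact hsuff i a k hk none hlt h j' hj'
    calc (∑ j, φ i (some j) a k * (N.L a k * N.D' i j (linkFlow N φ t i j) + lam j a k))
          + φ i none a k * (N.w i a k * N.C' i (workload N φ t i) + lam i a (k+1))
        ≤ (∑ j, φ i (some j) a k * mdelta N φ t lam i a k j')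
          + φ i none a k * mdelta N φ t lam i a k j' :=
          add_le_add (Finset.sum_le_sum fun j _ => hterm j) hnone
      _ = (φ i none a k + ∑ j, φ i (some j) a k) * mdelta N φ t lam i a k j' := by
          rw [add_mul, Finset.sum_mul]; ring
      _ = mdelta N φ t lam i a k j' := by rw [hsum, one_mul]
  · subst heq
    rw [hlam.last i a]
    have hsum := hφ.sum_one i a (N.K a) le_rfl hne
    rw [hφ.cpu_last i a, zero_add] at hsum
    calc (∑ j, φ i (some j) a (N.K a)
            * (N.L a (N.K a) * N.D' i j (linkFlow N φ t i j) + lam j a (N.K a)))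
        ≤ ∑ j, φ i (some j) a (N.K a) * mdelta N φ t lam i a (N.K a) j' :=
          Finset.sum_le_sum fun j _ => hterm j
      _ = mdelta N φ t lam i a (N.K a) j' := by rw [← Finset.sum_mul, hsum, one_mul]

end MyAux

section MyAux2

variable {V A : Type} [Fintype V] [DecidableEq V] [Fintype A]

lemma inflow_id (N : SCNet V A) {ρ : V → A → ℝ} {ψ : V → Option V → A → ℕ → ℝ}
    {s : V → A → ℕ → ℝ} (lam : V → A → ℕ → ℝ) (hψ : IsStrategy N ψ)
    (hs : IsTraffic N ρ ψ s) (a : A) :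
    ∑ k ∈ Finset.range (N.K a + 1), ∑ i, lam i a k * s i a k
      = (∑ i, lam i a 0 * ρ i a)
        + (∑ k ∈ Finset.range (N.K a + 1), ∑ i,
            lam i a k * ∑ j, s j a k * ψ j (some i) a k)
        + ∑ k ∈ Finset.range (N.K a + 1), ∑ i,
            lam i a (k + 1) * (s i a k * ψ i none a k) := by
  have hCgK : ∑ i, lam i a (N.K a + 1) * (s i a (N.K a) * ψ i none a (N.K a)) = 0 :=
    Finset.sum_eq_zero fun i _ => by rw [hψ.cpu_last, mul_zero, mul_zero]
  have hF0 : ∑ i, lam i a 0 * s i a 0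
      = (∑ i, lam i a 0 * ρ i a)
        + ∑ i, lam i a 0 * ∑ j, s j a 0 * ψ j (some i) a 0 := by
    rw [← Finset.sum_add_distrib]
    exact Finset.sum_congr rfl fun i _ => by rw [hs.base i a, mul_add]
  have hFk : ∀ k ∈ Finset.range (N.K a), ∑ i, lam i a (k+1) * s i a (k+1)
      = (∑ i, lam i a (k+1) * ∑ j, s j a (k+1) * ψ j (some i) a (k+1))
        + ∑ i, lam i a (k+1) * (s i a k * ψ i none a k) := by
    intro k hkm
    rw [← Finset.sum_add_distrib]
    refine Finset.sum_congr rfl fun i _ => ?_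
    have hstep := hs.step i a (k+1) (Nat.le_add_left 1 k)
      (Nat.succ_le_of_lt (Finset.mem_range.mp hkm))
    simp only [Nat.add_sub_cancel] at hstep
    rw [hstep, mul_add]
  rw [Finset.sum_range_succ' (fun k => ∑ i, lam i a k * s i a k) (N.K a),
    Finset.sum_range_succ'
      (fun k => ∑ i, lam i a k * ∑ j, s j a k * ψ j (some i) a k) (N.K a),
    Finset.sum_range_succ
      (fun k => ∑ i, lam i a (k+1) * (s i a k * ψ i none a k)) (N.K a),
    hCgK, add_zero, hF0, Finset.sum_congr rfl hFk, Finset.sum_add_distrib]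
  ring

lemma out_id (N : SCNet V A) (φ : V → Option V → A → ℕ → ℝ) (t : V → A → ℕ → ℝ)
    (lam : V → A → ℕ → ℝ) (ψ : V → Option V → A → ℕ → ℝ) (s : V → A → ℕ → ℝ) (a : A) :
    ∑ k ∈ Finset.range (N.K a + 1), ∑ i,
      ((∑ j, mdelta N φ t lam i a k (some j) * (s i a k * ψ i (some j) a k))
        + mdelta N φ t lam i a k none * (s i a k * ψ i none a k))
    = costa N φ t ψ s a
      + (∑ k ∈ Finset.range (N.K a + 1), ∑ i,
          lam i a k * ∑ j, s j a k * ψ j (some i) a k)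
      + ∑ k ∈ Finset.range (N.K a + 1), ∑ i,
          lam i a (k + 1) * (s i a k * ψ i none a k) := by
  unfold costa
  rw [← Finset.sum_add_distrib, ← Finset.sum_add_distrib]
  refine Finset.sum_congr rfl fun k _ => ?_
  have hB : (∑ i, lam i a k * ∑ j, s j a k * ψ j (some i) a k)
      = ∑ i, ∑ j, lam j a k * (s i a k * ψ i (some j) a k) := by
    rw [Finset.sum_comm]
    exact Finset.sum_congr rfl fun j _ => Finset.mul_sum _ _ _
  rw [hB]
  simp only [mdelta, add_mul, Finset.sum_add_distrib]
  ring

lemma outflow_le (N : SCNet V A) {φ : V → Option V → A → ℕ → ℝ} {t : V → A → ℕ → ℝ}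
    {lam : V → A → ℕ → ℝ} (hφ : IsStrategy N φ) (hlam : IsMarginal N φ t lam)
    (hsuff : SuffCond N φ t lam) {ψ : V → Option V → A → ℕ → ℝ} {s : V → A → ℕ → ℝ}
    (hψ : IsStrategy N ψ) (hsnn : ∀ i a k, 0 ≤ s i a k)
    (i : V) (a : A) (k : ℕ) (hk : k ≤ N.K a) :
    lam i a k * s i a k
      ≤ (∑ j, mdelta N φ t lam i a k (some j) * (s i a k * ψ i (some j) a k))
        + mdelta N φ t lam i a k none * (s i a k * ψ i none a k) := by
  by_cases hne : i = N.dest a ∧ k = N.K a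
  · obtain ⟨h1, h2⟩ := hne
    subst h2; subst h1
    simp [lam_dest N hφ hlam a, strat_dest_some N hψ a, strat_dest_none N hψ a]
  · have hmin := lam_min N hφ hlam hsuff i a k hk hne
    have hsum := hψ.sum_one i a k hk hne
    have h1 : (∑ j, ψ i (some j) a k) + ψ i none a k = 1 := by rw [add_comm]; exact hsum
    have hexp : lam i a k * s i a k
        = (∑ j, lam i a k * (s i a k * ψ i (some j) a k))
          + lam i a k * (s i a k * ψ i none a k) := by
      have h2 : (∑ j, s i a k * ψ i (some j) a k) + s i a k * ψ i none a k = s i a k := by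
        rw [← Finset.mul_sum, ← mul_add, h1, mul_one]
      rw [← Finset.mul_sum, ← mul_add, h2]
    rw [hexp]
    refine add_le_add (Finset.sum_le_sum fun j _ => ?_) ?_
    · rcases (hψ.nonneg i (some j) a k).eq_or_lt with h | h
      · rw [← h]; simp
      · refine mul_le_mul_of_nonneg_right (hmin (some j) ?_)
          (mul_nonneg (hsnn _ _ _) h.le)
        show N.E i j
        by_contra hE
        exact h.ne' (hψ.no_edge i j a k hE)
    · rcases (hψ.nonneg i none a k).eq_or_lt with h | h
      · rw [← h]; simp
      · refine mul_le_mul_of_nonneg_right (hmin none ?_)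
          (mul_nonneg (hsnn _ _ _) h.le)
        show k < N.K a
        rcases lt_or_eq_of_le hk with h' | h'
        · exact h'
        · exact absurd (h' ▸ hψ.cpu_last i a) h.ne'
    
lemma outflow_eq (N : SCNet V A) {φ : V → Option V → A → ℕ → ℝ} {t : V → A → ℕ → ℝ}
    {lam : V → A → ℕ → ℝ} (hφ : IsStrategy N φ) (hlam : IsMarginal N φ t lam)
    (i : V) (a : A) (k : ℕ) (hk : k ≤ N.K a) :
    lam i a k * t i a k
      = (∑ j, mdelta N φ t lam i a k (some j) * (t i a k * φ i (some j) a k))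
        + mdelta N φ t lam i a k none * (t i a k * φ i none a k) := by
  rcases lt_or_eq_of_le hk with hlt | heq
  · rw [hlam.step i a k hlt, add_mul, Finset.sum_mul]
    simp only [mdelta]
    congr 1
    · exact Finset.sum_congr rfl fun j _ => by ring
    · ring
  · subst heq
    rw [hφ.cpu_last i a, mul_zero, mul_zero, add_zero, hlam.last i a, Finset.sum_mul]
    simp only [mdelta]
    exact Finset.sum_congr rfl fun j _ => by ring

lemma flow_le (N : SCNet V A) {φ : V → Option V → A → ℕ → ℝ} {t : V → A → ℕ → ℝ}
    {lam : V → A → ℕ → ℝ} (hφ : IsStrategy N φ) (hlam : IsMarginal N φ t lam)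
    (hsuff : SuffCond N φ t lam) {ρ : V → A → ℝ} {ψ : V → Option V → A → ℕ → ℝ}
    {s : V → A → ℕ → ℝ} (hψ : IsStrategy N ψ) (hs : IsTraffic N ρ ψ s) (a : A) :
    ∑ i, lam i a 0 * ρ i a ≤ costa N φ t ψ s a := by
  have h1 := inflow_id N lam hψ hs a
  have h2 := out_id N φ t lam ψ s a
  have h3 : ∑ k ∈ Finset.range (N.K a + 1), ∑ i, lam i a k * s i a k
      ≤ ∑ k ∈ Finset.range (N.K a + 1), ∑ i,
        ((∑ j, mdelta N φ t lam i a k (some j) * (s i a k * ψ i (some j) a k))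
          + mdelta N φ t lam i a k none * (s i a k * ψ i none a k)) :=
    Finset.sum_le_sum fun k hk => Finset.sum_le_sum fun i _ =>
      outflow_le N hφ hlam hsuff hψ hs.nonneg i a k
        (Nat.lt_succ_iff.mp (Finset.mem_range.mp hk))
  linarith

lemma flow_eq (N : SCNet V A) {φ : V → Option V → A → ℕ → ℝ} {t : V → A → ℕ → ℝ}
    {lam : V → A → ℕ → ℝ} {r : V → A → ℝ} (hφ : IsStrategy N φ)
    (hlam : IsMarginal N φ t lam) (ht : IsTraffic N r φ t) (a : A) :
    ∑ i, lam i a 0 * r i a = costa N φ t φ t a := by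
  have h1 := inflow_id N lam hφ ht a
  have h2 := out_id N φ t lam φ t a
  have h3 : ∑ k ∈ Finset.range (N.K a + 1), ∑ i, lam i a k * t i a k
      = ∑ k ∈ Finset.range (N.K a + 1), ∑ i,
        ((∑ j, mdelta N φ t lam i a k (some j) * (t i a k * φ i (some j) a k))
          + mdelta N φ t lam i a k none * (t i a k * φ i none a k)) :=
    Finset.sum_congr rfl fun k hk => Finset.sum_congr rfl fun i _ =>
      outflow_eq N hφ hlam i a k (Nat.lt_succ_iff.mp (Finset.mem_range.mp hk))
  linarith

lemma swap_ak {β : Type} [Fintype β] (N : SCNet V A) (X : A → ℕ → β → ℝ) :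
    ∑ a, ∑ k ∈ Finset.range (N.K a + 1), ∑ b, X a k b
      = ∑ b, ∑ a, ∑ k ∈ Finset.range (N.K a + 1), X a k b := by
  calc ∑ a, ∑ k ∈ Finset.range (N.K a + 1), ∑ b, X a k b
      = ∑ a, ∑ b, ∑ k ∈ Finset.range (N.K a + 1), X a k b :=
        Finset.sum_congr rfl fun a _ => Finset.sum_comm
    _ = ∑ b, ∑ a, ∑ k ∈ Finset.range (N.K a + 1), X a k b := Finset.sum_comm

end MyAux2

section MyAux3

variable {V A : Type} [Fintype V] [DecidableEq V] [Fintype A]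

lemma dot_eq (N : SCNet V A) (φ : V → Option V → A → ℕ → ℝ) (t : V → A → ℕ → ℝ)
    {ψ : V → Option V → A → ℕ → ℝ} (s : V → A → ℕ → ℝ) (hψ : IsStrategy N ψ) :
    ∑ a, costa N φ t ψ s a
      = (∑ i, ∑ j, if N.E i j then N.D' i j (linkFlow N φ t i j) * linkFlow N ψ s i j else 0)
        + ∑ i, N.C' i (workload N φ t i) * workload N ψ s i := by
  unfold costa
  simp only [Finset.sum_add_distrib]
  congr 1
  · rw [swap_ak N (fun a k (i : V) =>
      ∑ j, (N.L a k * N.D' i j (linkFlow N φ t i j)) * (s i a k * ψ i (some j) a k))]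
    refine Finset.sum_congr rfl fun i _ => ?_
    rw [swap_ak N (fun a k (j : V) =>
      (N.L a k * N.D' i j (linkFlow N φ t i j)) * (s i a k * ψ i (some j) a k))]
    refine Finset.sum_congr rfl fun j _ => ?_
    by_cases hE : N.E i j
    · rw [if_pos hE]
      unfold linkFlow
      rw [Finset.mul_sum]
      refine Finset.sum_congr rfl fun a _ => ?_
      rw [Finset.mul_sum]
      exact Finset.sum_congr rfl fun k _ => by ring
    · rw [if_neg hE]
      refine Finset.sum_eq_zero fun a _ => Finset.sum_eq_zero fun k _ => ?_
      rw [hψ.no_edge i j a k hE, mul_zero, mul_zero]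
  · rw [swap_ak N (fun a k (i : V) =>
      (N.w i a k * N.C' i (workload N φ t i)) * (s i a k * ψ i none a k))]
    refine Finset.sum_congr rfl fun i _ => ?_
    unfold workload
    rw [Finset.mul_sum]
    refine Finset.sum_congr rfl fun a _ => ?_
    rw [Finset.mul_sum]
    exact Finset.sum_congr rfl fun k _ => by ring

end MyAux3

/-- **Theorem 5 (Sufficient optimality condition with congestion control).** With
upper input limits `r̄` and concave nondecreasing continuously differentiable
utilities `U` vanishing at `0`, if an admitted rate `r` together with a pair `(φ,t)`
feasible for `r` admits a marginal vector satisfying the sufficient-optimality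
condition, and moreover the admission marginals satisfy
`λ_i(a,0) ≤ U'_{ia}(r_i(a))` whenever `r_i(a) > 0` and
`λ_i(a,0) ≥ U'_{ia}(r_i(a))` whenever `r_i(a) < r̄_i(a)`, then `(r,φ,t)` maximizes
the utility-minus-cost `W` over all admitted rates and feasible pairs. -/
theorem sufficient_optimality_congestion_control
    (N : SCNet V A)
    (rbar : V → A → ℝ) (hrbar : ∀ i a, 0 ≤ rbar i a)
    (U U' : V → A → ℝ → ℝ)
    (hU_mono : ∀ i a, MonotoneOn (U i a) (Set.Icc 0 (rbar i a)))
    (hU_conc : ∀ i a, ConcaveOn ℝ (Set.Icc 0 (rbar i a)) (U i a))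
    (hU_deriv : ∀ i a, ∀ x ∈ Set.Icc 0 (rbar i a),
      HasDerivWithinAt (U i a) (U' i a x) (Set.Icc 0 (rbar i a)) x)
    (hU'_cont : ∀ i a, ContinuousOn (U' i a) (Set.Icc 0 (rbar i a)))
    (hU_zero : ∀ i a, U i a 0 = 0)
    (r : V → A → ℝ) (hadm : ∀ i a, r i a ∈ Set.Icc 0 (rbar i a))
    (φ : V → Option V → A → ℕ → ℝ) (t : V → A → ℕ → ℝ) (lam : V → A → ℕ → ℝ)
    (hfeas : Feasible N r φ t) (hlam : IsMarginal N φ t lam)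
    (hsuff : SuffCond N φ t lam)
    (hcc : ∀ i a, 0 < rbar i a →
      (0 < r i a → lam i a 0 ≤ U' i a (r i a))
      ∧ (r i a < rbar i a → U' i a (r i a) ≤ lam i a 0)) :
    ∀ (r' : V → A → ℝ) (φ' : V → Option V → A → ℕ → ℝ) (t' : V → A → ℕ → ℝ),
      (∀ i a, r' i a ∈ Set.Icc 0 (rbar i a)) → Feasible N r' φ' t' →
      (∑ i, ∑ a, U i a (r' i a)) - totalCost N φ' t'
        ≤ (∑ i, ∑ a, U i a (r i a)) - totalCost N φ t := by
  intro r' φ' t' hadm' hfeas'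
  obtain ⟨hφ, ht⟩ := hfeas
  obtain ⟨hφ', ht'⟩ := hfeas'
  have hFnn : ∀ (ψ : V → Option V → A → ℕ → ℝ) (s : V → A → ℕ → ℝ), IsStrategy N ψ →
      (∀ i a k, 0 ≤ s i a k) → ∀ i j, 0 ≤ linkFlow N ψ s i j := by
    intro ψ s hψ hs i j
    refine Finset.sum_nonneg fun a _ => Finset.sum_nonneg fun k hk => ?_
    exact mul_nonneg (N.hL a k (Nat.lt_succ_iff.mp (Finset.mem_range.mp hk))).le
      (mul_nonneg (hs _ _ _) (hψ.nonneg _ _ _ _))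
  have hGnn : ∀ (ψ : V → Option V → A → ℕ → ℝ) (s : V → A → ℕ → ℝ), IsStrategy N ψ →
      (∀ i a k, 0 ≤ s i a k) → ∀ i, 0 ≤ workload N ψ s i := by
    intro ψ s hψ hs i
    refine Finset.sum_nonneg fun a _ => Finset.sum_nonneg fun k hk => ?_
    exact mul_nonneg (N.hw i a k (Nat.lt_succ_iff.mp (Finset.mem_range.mp hk))).le
      (mul_nonneg (hs _ _ _) (hψ.nonneg _ _ _ _))
  have hD : ∀ i j,
      (if N.E i j then N.D i j (linkFlow N φ t i j) else 0)
        - (if N.E i j then N.D' i j (linkFlow N φ t i j) * linkFlow N φ t i j else 0)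
      ≤ (if N.E i j then N.D i j (linkFlow N φ' t' i j) else 0)
        - (if N.E i j then N.D' i j (linkFlow N φ t i j) * linkFlow N φ' t' i j else 0) := by
    intro i j
    by_cases hE : N.E i j
    · simp only [if_pos hE]
      have h := my_convex_tangent (N.hD_conv i j hE)
        (Set.mem_Ici.mpr (hFnn φ t hφ ht.nonneg i j))
        (Set.mem_Ici.mpr (hFnn φ' t' hφ' ht'.nonneg i j))
        (N.hD_deriv i j hE _ (Set.mem_Ici.mpr (hFnn φ t hφ ht.nonneg i j)))
      nlinarith [h]
    · simp [hE]
  have hC : ∀ i,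
      N.C i (workload N φ t i) - N.C' i (workload N φ t i) * workload N φ t i
      ≤ N.C i (workload N φ' t' i) - N.C' i (workload N φ t i) * workload N φ' t' i := by
    intro i
    have h := my_convex_tangent (N.hC_conv i)
      (Set.mem_Ici.mpr (hGnn φ t hφ ht.nonneg i))
      (Set.mem_Ici.mpr (hGnn φ' t' hφ' ht'.nonneg i))
      (N.hC_deriv i _ (Set.mem_Ici.mpr (hGnn φ t hφ ht.nonneg i)))
    nlinarith [h]
  have hDsum := Finset.sum_le_sum
    (fun i (_ : i ∈ Finset.univ) => Finset.sum_le_sum fun j (_ : j ∈ Finset.univ) => hD i j)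
  have hCsum := Finset.sum_le_sum (fun i (_ : i ∈ Finset.univ) => hC i)
  simp only [Finset.sum_sub_distrib] at hDsum hCsum
  have hdot' := dot_eq N φ t t' hφ'
  have hdotr := dot_eq N φ t t hφ
  have key1 : ∑ a, ∑ i, lam i a 0 * r' i a ≤ ∑ a, costa N φ t φ' t' a :=
    Finset.sum_le_sum fun a _ => flow_le N hφ hlam hsuff hφ' ht' a
  have key2 : ∑ a, ∑ i, lam i a 0 * r i a = ∑ a, costa N φ t φ t a :=
    Finset.sum_congr rfl fun a _ => flow_eq N hφ hlam ht a
  have hU : ∀ i a, U i a (r' i a) - U i a (r i a) ≤ lam i a 0 * (r' i a - r i a) := by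
    intro i a
    have htang := my_concave_tangent (hU_conc i a) (hadm i a) (hadm' i a)
      (hU_deriv i a _ (hadm i a))
    rcases lt_trichotomy (r' i a) (r i a) with h | h | h
    · have h0 : 0 < r i a := lt_of_le_of_lt (hadm' i a).1 h
      have hb : 0 < rbar i a := lt_of_lt_of_le h0 (hadm i a).2
      have hl := (hcc i a hb).1 h0
      nlinarith
    · rw [h]; simp
    · have hb2 : r i a < rbar i a := lt_of_lt_of_le h (hadm' i a).2
      have hb : 0 < rbar i a := lt_of_le_of_lt (hadm i a).1 hb2
      have hl := (hcc i a hb).2 hb2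
      nlinarith
  have hU2 := Finset.sum_le_sum
    (fun i (_ : i ∈ Finset.univ) => Finset.sum_le_sum fun a (_ : a ∈ Finset.univ) => hU i a)
  simp only [mul_sub, Finset.sum_sub_distrib] at hU2
  have hsw : ∀ ρ : V → A → ℝ,
      (∑ i, ∑ a, lam i a 0 * ρ i a) = ∑ a, ∑ i, lam i a 0 * ρ i a := fun ρ => Finset.sum_comm
  rw [hsw r', hsw r] at hU2
  unfold totalCost
  linarith [hdot', hdotr, key1, key2, hDsum, hCsum, hU2]
end
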